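/- Let K be a finite simplicial complex with an acyclic partial matching μ : M → M. For each q ≥ 0, let Crit_q(K, μ) be the subspace of C_q(K) spanned by {φ_q(γ) : γ ∈ R_q(μ)} and Match_q(K, μ) the subspace spanned by M_q^↑ ∪ {∂β : β ∈ M_{q+1}^↑}. Then both Crit_*(K, μ) and Match_*(K, μ) are chain subcomplexes of C_*(K) (each is closed under the boundary operator ∂), and C_q(K) = Crit_q(K, μ) ⊕ Match_q(K, μ) for every q ≥ 0. -/

import Mathlib

set_option maxSynthPendingDepth 2

/-! Simplicial ℤ/2 chains and homology machinery. -/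

/-- Chains with `ℤ/2` coefficients, formal sums of finite subsets of `V`. -/
abbrev Ch (V : Type*) := Finset V →₀ ZMod 2

/-- The simplicial boundary operator: a simplex with at least two vertices is sent
to the sum of its codimension-1 faces; vertices are sent to `0`. -/
noncomputable def bdry (V : Type*) [DecidableEq V] : Ch V →ₗ[ZMod 2] Ch V :=
  Finsupp.linearCombination (ZMod 2) fun σ : Finset V =>
    if σ.card ≤ 1 then 0 else ∑ v ∈ σ, Finsupp.single (σ.erase v) (1 : ZMod 2)

/-- A simplicial complex: a collection of nonempty finite subsets of `V`
closed under taking nonempty subsets. -/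
def IsComplex {V : Type*} (K : Set (Finset V)) : Prop :=
  ∀ σ ∈ K, σ.Nonempty ∧ ∀ τ ⊆ σ, τ.Nonempty → τ ∈ K

/-- The space of chains supported on simplices of `K` with `k` vertices
(i.e. the simplicial chain group of degree `k - 1`). -/
noncomputable def chainCard {V : Type*} [DecidableEq V] (K : Set (Finset V)) (k : ℕ) :
    Submodule (ZMod 2) (Ch V) :=
  Submodule.span (ZMod 2) {f | ∃ σ ∈ K, σ.card = k ∧ f = Finsupp.single σ 1}

theorem chainCard_mono {V : Type*} [DecidableEq V] {K₁ K₂ : Set (Finset V)}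
    (h : K₁ ⊆ K₂) (k : ℕ) : chainCard K₁ k ≤ chainCard K₂ k := by
  apply Submodule.span_mono
  rintro f ⟨σ, hσ, hc, rfl⟩
  exact ⟨σ, h hσ, hc, rfl⟩

/-- Cycles (in cardinality grading `k`, i.e. degree `k-1`) of a chain subcomplex `W`. -/
noncomputable def cyclesOf {V : Type*} [DecidableEq V] (W : ℕ → Submodule (ZMod 2) (Ch V)) (k : ℕ) :
    Submodule (ZMod 2) (Ch V) :=
  W k ⊓ LinearMap.ker (bdry V)

/-- Boundaries (in cardinality grading `k`, i.e. degree `k-1`) of a chain subcomplex `W`. -/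
noncomputable def bdriesOf {V : Type*} [DecidableEq V] (W : ℕ → Submodule (ZMod 2) (Ch V)) (k : ℕ) :
    Submodule (ZMod 2) (Ch V) :=
  Submodule.map (bdry V) (W (k + 1))

/-- Homology of the chain complex `W` in cardinality grading `k` (degree `k - 1`):
cycles modulo boundaries. -/
abbrev homolOf {V : Type*} [DecidableEq V] (W : ℕ → Submodule (ZMod 2) (Ch V)) (k : ℕ) :=
  ↥(cyclesOf W k) ⧸ (bdriesOf W k).comap (cyclesOf W k).subtype

/-- The map on homology induced by a degreewise inclusion of chain complexes. -/
noncomputable def homolMap {V : Type*} [DecidableEq V]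
    (W W' : ℕ → Submodule (ZMod 2) (Ch V)) (h : ∀ k, W k ≤ W' k) (k : ℕ) :
    homolOf W k →ₗ[ZMod 2] homolOf W' k :=
  Submodule.mapQ _ _ (Submodule.inclusion (inf_le_inf (h k) le_rfl))
    (by
      intro x hx
      simp only [Submodule.mem_comap, Submodule.subtype_apply, Submodule.coe_inclusion]
        at hx ⊢
      exact Submodule.map_mono (h (k + 1)) hx)

/-! Discrete Morse theory: partial matchings, acyclicity, the closure map. -/

/-- `Covers σ τ`: `σ` covers `τ` in the face poset, i.e. `τ ⊆ σ` in codimension one. -/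
def Covers {V : Type*} (σ τ : Finset V) : Prop :=
  τ ⊆ σ ∧ σ.card = τ.card + 1

/-- A partial matching: an involution `μ` on a set `M` of simplices matching each
simplex with a simplex that covers it or that it covers. -/
structure PartialMatching (V : Type*) where
  M : Set (Finset V)
  μ : Finset V → Finset V
  mem_M : ∀ σ ∈ M, μ σ ∈ M
  invol : ∀ σ ∈ M, μ (μ σ) = σ
  matched : ∀ σ ∈ M, Covers (μ σ) σ ∨ Covers σ (μ σ)

/-- Acyclicity of a partial matching: there is no cyclic sequence
`σ₁ ≻ μ(σ₁) ≺ σ₂ ≻ μ(σ₂) ≺ ⋯ ≺ σ_l ≻ μ(σ_l) ≺ σ₁` with `l ≥ 2` and the `σᵢ` distinct. -/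
def PartialMatching.Acyclic {V : Type*} (m : PartialMatching V) : Prop :=
  ¬ ∃ (l : ℕ) (f : ℕ → Finset V), 2 ≤ l ∧
      (∀ i < l, ∀ j < l, f i = f j → i = j) ∧
      (∀ i < l, f i ∈ m.M ∧ Covers (f i) (m.μ (f i))) ∧
      (∀ i < l, Covers (f ((i + 1) % l)) (m.μ (f i)))

/-- `M^↑`: matched simplices lying above their partner. -/
def Mup {V : Type*} (m : PartialMatching V) : Set (Finset V) :=
  {σ | σ ∈ m.M ∧ Covers σ (m.μ σ)}

/-- `M_q^↑` in cardinality grading: elements of `M^↑` with `k` vertices (degree `k-1`). -/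
def MupCard {V : Type*} (m : PartialMatching V) (k : ℕ) : Set (Finset V) :=
  {σ | σ ∈ Mup m ∧ σ.card = k}

/-- `R_q(μ)` in cardinality grading: the unmatched (critical) simplices of `K`
with `k` vertices (degree `k-1`). -/
def Rcard {V : Type*} (K : Set (Finset V)) (m : PartialMatching V) (k : ℕ) :
    Set (Finset V) :=
  {σ | σ ∈ K ∧ σ.card = k ∧ σ ∉ m.M}

/-- `(α, β)` is an edge of the graph `G(μ)`: `μ β` is defined, `β` lies above its
partner, and `α` covers `μ β` (with `β ≠ α`). -/
def IsEdge {V : Type*} (m : PartialMatching V) (α β : Finset V) : Prop :=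
  β ≠ α ∧ β ∈ m.M ∧ Covers β (m.μ β) ∧ Covers α (m.μ β)

open scoped Classical in
/-- `φ` is the closure map of the matching `m` on `K`: it satisfies the defining
recursion `φ α = α + ∑ φ β` over the edges `(α, β)` emanating from `α` in `G(μ)`. -/
def IsClosure {V : Type*} [Fintype V] [DecidableEq V] (K : Set (Finset V))
    (m : PartialMatching V) (φ : Finset V → Ch V) : Prop :=
  ∀ α ∈ K, φ α = Finsupp.single α 1 + ∑ β : Finset V, if IsEdge m α β then φ β else 0

/-- The degree-`(k-1)` chain group of the Morse (critical) complex of `C`: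
the span of the closures of the unmatched simplices of `C` with `k` vertices. -/
noncomputable def critWOn {V : Type*} [DecidableEq V] (C : Set (Finset V))
    (m : PartialMatching V) (φ : Finset V → Ch V) (k : ℕ) :
    Submodule (ZMod 2) (Ch V) :=
  Submodule.span (ZMod 2) {f | ∃ γ, γ ∈ C ∧ γ.card = k ∧ γ ∉ m.M ∧ f = φ γ}

theorem critWOn_mono {V : Type*} [DecidableEq V] {C₁ C₂ : Set (Finset V)}
    (h : C₁ ⊆ C₂) (m : PartialMatching V) (φ : Finset V → Ch V) (k : ℕ) :
    critWOn C₁ m φ k ≤ critWOn C₂ m φ k := by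
  apply Submodule.span_mono
  rintro f ⟨γ, hγ, hc, hm, rfl⟩
  exact ⟨γ, h hγ, hc, hm, rfl⟩

/-- The degree-`(k-1)` chain group of the complex `Match`, spanned by `M_{k-1}^↑`
together with the boundaries of the elements of `M_k^↑`. -/
noncomputable def matchW {V : Type*} [DecidableEq V] (m : PartialMatching V) (k : ℕ) :
    Submodule (ZMod 2) (Ch V) :=
  Submodule.span (ZMod 2)
    ({f | ∃ σ ∈ MupCard m k, f = Finsupp.single σ 1} ∪
      {f | ∃ β ∈ MupCard m (k + 1), f = bdry V (Finsupp.single β 1)})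

/-- The set `B_q^R ∪ B_q^↑ ∪ B_q^↓` (in cardinality grading `k = q + 1`). -/
noncomputable def morseBasis {V : Type*} [DecidableEq V] (K : Set (Finset V))
    (m : PartialMatching V) (φ : Finset V → Ch V) (k : ℕ) : Set (Ch V) :=
  {f | ∃ γ ∈ Rcard K m k, f = φ γ} ∪
    ({f | ∃ σ ∈ MupCard m k, f = Finsupp.single σ 1} ∪
      {f | ∃ β ∈ MupCard m (k + 1), f = bdry V (Finsupp.single β 1)})

section MorseAux

open Finsupp

variable {V : Type*} [Fintype V] [DecidableEq V]

lemma ch_add_self (x : Ch V) : x + x = 0 := by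
  have h : ((2 : ZMod 2)) • x = 0 := by
    have : (2 : ZMod 2) = 0 := rfl
    rw [this, zero_smul]
  rwa [two_smul] at h

lemma zmod2_cancel {a b c : Ch V} (h : a = b + c) : a + b = c := by
  rw [h, add_comm b c, add_assoc, ch_add_self, add_zero]

lemma bdry_single (σ : Finset V) :
    bdry V (Finsupp.single σ (1 : ZMod 2)) =
      if σ.card ≤ 1 then 0 else ∑ v ∈ σ, Finsupp.single (σ.erase v) (1 : ZMod 2) := by
  simp [bdry, Finsupp.linearCombination_single]

open scoped Classical in
lemma bdry_single_apply (σ τ : Finset V) :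
    bdry V (Finsupp.single σ (1 : ZMod 2)) τ
      = if Covers σ τ ∧ 2 ≤ σ.card then 1 else 0 := by
  rw [bdry_single]
  by_cases h : σ.card ≤ 1
  · rw [if_pos h, if_neg (by omega : ¬ (Covers σ τ ∧ 2 ≤ σ.card))]
    rfl
  · rw [if_neg h]
    rw [Finsupp.finset_sum_apply]
    by_cases hc : Covers σ τ
    · obtain ⟨hsub, hcard⟩ := hc
      have hv : ∃ v ∈ σ, σ.erase v = τ := by
        have hne : (σ \ τ).Nonempty := by
          rw [← Finset.card_pos, Finset.card_sdiff_of_subset hsub]; omega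
        obtain ⟨v, hv⟩ := hne
        have hone : (σ \ τ).card = 1 := by rw [Finset.card_sdiff_of_subset hsub]; omega
        obtain ⟨w, hw⟩ := Finset.card_eq_one.1 hone
        have hvw : v = w := by rwa [hw, Finset.mem_singleton] at hv
        subst hvw
        rw [Finset.mem_sdiff] at hv
        refine ⟨v, hv.1, ?_⟩
        rw [Finset.erase_eq, ← hw, Finset.sdiff_sdiff_self_left]
        exact Finset.inter_eq_right.2 hsub
      obtain ⟨v₀, hv₀, hev₀⟩ := hv
      have key : ∀ v ∈ σ, (Finsupp.single (σ.erase v) (1 : ZMod 2)) τ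
          = if v = v₀ then 1 else 0 := by
        intro v hv
        rw [Finsupp.single_apply]
        by_cases hvv : v = v₀
        · subst hvv; rw [if_pos hev₀, if_pos rfl]
        · rw [if_neg, if_neg hvv]
          intro he
          apply hvv
          have hni : v ∉ σ.erase v := Finset.notMem_erase v σ
          rw [he, ← hev₀, Finset.mem_erase] at hni
          by_contra hne
          exact hni ⟨hne, hv⟩
      rw [Finset.sum_congr rfl key, Finset.sum_ite_eq' σ v₀ (fun _ => (1 : ZMod 2)),
        if_pos hv₀, if_pos ⟨⟨hsub, hcard⟩, by omega⟩]
    · rw [if_neg (by tauto)]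
      apply Finset.sum_eq_zero
      intro v hv
      rw [Finsupp.single_apply, if_neg]
      intro he
      apply hc
      constructor
      · rw [← he]; exact Finset.erase_subset v σ
      · rw [← he, Finset.card_erase_of_mem hv]; omega

lemma bdry_bdry_single (σ : Finset V) :
    bdry V (bdry V (Finsupp.single σ (1 : ZMod 2))) = 0 := by
  rw [bdry_single]
  by_cases h : σ.card ≤ 1
  · simp [h]
  · rw [if_neg h, map_sum]
    by_cases h2 : σ.card = 2
    · apply Finset.sum_eq_zero
      intro v hv
      rw [bdry_single, if_pos]
      rw [Finset.card_erase_of_mem hv]; omega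
    · have h3 : ∀ v ∈ σ, bdry V (Finsupp.single (σ.erase v) (1 : ZMod 2))
          = ∑ w ∈ σ.erase v, Finsupp.single ((σ.erase v).erase w) (1 : ZMod 2) := by
        intro v hv
        rw [bdry_single, if_neg]
        rw [Finset.card_erase_of_mem hv]; omega
      rw [Finset.sum_congr rfl h3, Finset.sum_sigma']
      apply Finset.sum_involution (fun x _ => ⟨x.2, x.1⟩)
      · intro x hx
        rw [Finset.mem_sigma] at hx
        have : (σ.erase x.1).erase x.2 = (σ.erase x.2).erase x.1 := Finset.erase_right_comm
        rw [this]
        exact ch_add_self _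
      · intro x hx _
        rw [Finset.mem_sigma] at hx
        intro he
        have h1 : x.2 = x.1 := congrArg Sigma.fst he
        have := Finset.ne_of_mem_erase hx.2
        exact this h1
      · intro x hx; rfl
      · intro x hx
        rw [Finset.mem_sigma] at hx ⊢
        refine ⟨Finset.mem_of_mem_erase hx.2, Finset.mem_erase.2 ⟨?_, hx.1⟩⟩
        exact fun he => (Finset.ne_of_mem_erase hx.2) he.symm

lemma bdry_bdry (f : Ch V) : bdry V (bdry V f) = 0 := by
  induction f using Finsupp.induction_linear with
  | zero => simp
  | add f g hf hg => rw [map_add, map_add, hf, hg, add_zero]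
  | single a b =>
    have : Finsupp.single a b = b • Finsupp.single a (1 : ZMod 2) := by
      rw [Finsupp.smul_single, smul_eq_mul, mul_one]
    rw [this, map_smul, map_smul, bdry_bdry_single, smul_zero]

end MorseAux

section MorseWF

set_option linter.unusedSectionVars false

variable {V : Type*} [Fintype V] [DecidableEq V] {m : PartialMatching V}

lemma edge_card {α β : Finset V} (h : IsEdge m α β) : β.card = α.card := by
  obtain ⟨-, -, ⟨-, h1⟩, -, h2⟩ := h
  omega

private lemma transGen_chain {A : Type*} {r : A → A → Prop} {a b : A}
    (h : Relation.TransGen r a b) :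
    ∃ n, 1 ≤ n ∧ ∃ f : ℕ → A, f 0 = a ∧ f n = b ∧ ∀ i < n, r (f i) (f (i + 1)) := by
  induction h with
  | @single b' hab =>
    refine ⟨1, le_rfl, fun i => if i = 0 then a else b', by simp, by simp, ?_⟩
    intro i hi
    interval_cases i
    simpa using hab
  | @tail b' c hab hbc ih =>
    obtain ⟨n, hn, f, h0, hb, hch⟩ := ih
    refine ⟨n + 1, by omega, fun i => if i ≤ n then f i else c, by simp [h0], by simp, ?_⟩
    intro i hi
    show r (if i ≤ n then f i else c) (if i + 1 ≤ n then f (i + 1) else c)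
    by_cases hin : i < n
    · rw [if_pos (by omega), if_pos (by omega)]
      exact hch i hin
    · have hieq : i = n := by omega
      subst hieq
      rw [if_pos le_rfl, if_neg (by omega), hb]
      exact hbc

lemma edge_transGen_irrefl (hac : m.Acyclic) (a : Finset V) :
    ¬ Relation.TransGen (fun α β => IsEdge m α β) a a := by
  intro h
  obtain ⟨n, hn, f, h0, hb, hch⟩ := transGen_chain h
  by_cases hn1 : n = 1
  · subst hn1
    exact (hch 0 (by omega)).1 (by rw [h0, hb])
  have hn2 : 2 ≤ n := by omega
  set F : ℕ → Finset V := fun i => f (i % n) with hF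
  have hch' : ∀ i, IsEdge m (F i) (F (i + 1)) := by
    intro i
    have hlt : i % n < n := Nat.mod_lt _ (by omega)
    have key : (i + 1) % n = (i % n + 1) % n := by
      rw [Nat.add_mod i 1 n, Nat.mod_eq_of_lt (by omega : 1 < n)]
    by_cases h1 : i % n + 1 < n
    · have e1 : F (i + 1) = f (i % n + 1) := by
        show f ((i + 1) % n) = f (i % n + 1)
        rw [key, Nat.mod_eq_of_lt h1]
      rw [e1]
      exact hch (i % n) hlt
    · have he : i % n = n - 1 := by omega
      have e1 : F (i + 1) = f n := by
        show f ((i + 1) % n) = f n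
        rw [key, he, Nat.sub_add_cancel (by omega), Nat.mod_self, h0, hb]
      rw [e1]
      show IsEdge m (f (i % n)) (f n)
      rw [he]
      have := hch (n - 1) (by omega)
      rwa [Nat.sub_add_cancel (by omega)] at this
  have hP : ∃ d, 0 < d ∧ ∃ i, F i = F (i + d) := by
    refine ⟨n, by omega, 0, ?_⟩
    show f (0 % n) = f ((0 + n) % n)
    rw [Nat.zero_mod, Nat.zero_add, Nat.mod_self]
  classical
  set d := Nat.find hP with hd
  obtain ⟨hdpos, i₀, hi₀⟩ := Nat.find_spec hP
  rw [← hd] at hdpos hi₀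
  have hmin : ∀ d' < d, ¬ (0 < d' ∧ ∃ i, F i = F (i + d')) := fun d' hd' => Nat.find_min hP hd'
  have hd2 : 2 ≤ d := by
    by_contra h2
    have hde : d = 1 := by omega
    rw [hde] at hi₀
    exact (hch' i₀).1 hi₀.symm
  have hinj : ∀ s, s < d → ∀ t, t < d → F (i₀ + s) = F (i₀ + t) → s = t := by
    intro s hs t ht hst
    by_contra hne
    rcases Nat.lt_or_ge s t with hlt | hge
    · refine hmin (t - s) (by omega) ⟨by omega, i₀ + s, ?_⟩
      rw [hst]; congr 1; omega
    · refine hmin (s - t) (by omega) ⟨by omega, i₀ + t, ?_⟩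
      rw [← hst]; congr 1; omega
  have hper : F (i₀ + d) = F i₀ := hi₀.symm
  set g : ℕ → Finset V := fun j => F (i₀ + d - j % d) with hg
  have hgval : ∀ j, j < d → g j = F (i₀ + d - j) := by
    intro j hj
    show F (i₀ + d - j % d) = F (i₀ + d - j)
    rw [Nat.mod_eq_of_lt hj]
  have hnorm : ∀ j, j < d → g j = F (i₀ + (d - j) % d) := by
    intro j hj
    rw [hgval j hj]
    by_cases hj0 : j = 0
    · subst hj0
      simp only [Nat.sub_zero]
      rw [Nat.mod_self, Nat.add_zero]
      exact hper
    · rw [Nat.mod_eq_of_lt (by omega)]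
      congr 1
      omega
  have hedge : ∀ j, j < d → IsEdge m (F (i₀ + d - j - 1)) (g j) := by
    intro j hj
    have hthis := hch' (i₀ + d - j - 1)
    have he : i₀ + d - j - 1 + 1 = i₀ + d - j := by omega
    rw [he] at hthis
    rw [hgval j hj]
    exact hthis
  apply hac
  refine ⟨d, g, hd2, ?_, ?_, ?_⟩
  · intro a1 ha1 b1 hb1 hab
    rw [hnorm a1 ha1, hnorm b1 hb1] at hab
    have hres := hinj _ (Nat.mod_lt _ (by omega)) _ (Nat.mod_lt _ (by omega)) hab
    rcases Nat.eq_zero_or_pos a1 with h0a | h0a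
    · subst h0a
      rw [Nat.sub_zero, Nat.mod_self] at hres
      rcases Nat.eq_zero_or_pos b1 with h0b | h0b
      · omega
      · rw [Nat.mod_eq_of_lt (by omega)] at hres
        omega
    · rw [Nat.mod_eq_of_lt (by omega)] at hres
      rcases Nat.eq_zero_or_pos b1 with h0b | h0b
      · subst h0b
        rw [Nat.sub_zero, Nat.mod_self] at hres
        omega
      · rw [Nat.mod_eq_of_lt (by omega)] at hres
        omega
  · intro j hj
    obtain ⟨-, hM, hup, -⟩ := hedge j hj
    exact ⟨hM, hup⟩
  · intro j hj
    obtain ⟨-, -, -, hcov⟩ := hedge j hj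
    have he : g ((j + 1) % d) = F (i₀ + d - j - 1) := by
      by_cases hj1 : j + 1 < d
      · rw [Nat.mod_eq_of_lt hj1, hgval _ hj1]
        have harith : i₀ + d - (j + 1) = i₀ + d - j - 1 := by omega
        rw [harith]
      · have hj1' : (j + 1) % d = 0 := by
          have : j + 1 = d := by omega
          rw [this, Nat.mod_self]
        rw [hj1', hgval 0 (by omega), Nat.sub_zero, hper]
        congr 1
        omega
    rw [he]
    exact hcov

lemma edge_wf (hac : m.Acyclic) : WellFounded (fun α β : Finset V => IsEdge m α β) := by
  have hirr : IsIrrefl (Finset V) (Relation.TransGen (fun α β : Finset V => IsEdge m α β)) :=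
    ⟨edge_transGen_irrefl hac⟩
  have hwf := Finite.wellFounded_of_trans_of_irrefl
    (Relation.TransGen (fun α β : Finset V => IsEdge m α β))
  exact Subrelation.wf (fun h => Relation.TransGen.single h) hwf

lemma edge_wf_swap (hac : m.Acyclic) : WellFounded (fun β α : Finset V => IsEdge m α β) := by
  have hirr : IsIrrefl (Finset V) (Relation.TransGen (fun β α : Finset V => IsEdge m α β)) := by
    constructor
    intro x hx
    exact edge_transGen_irrefl hac x (Relation.transGen_swap.2 hx)
  have hwf := Finite.wellFounded_of_trans_of_irrefl
    (Relation.TransGen (fun β α : Finset V => IsEdge m α β))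
  exact Subrelation.wf (q := fun β α : Finset V => IsEdge m α β)
    (r := Relation.TransGen (fun β α : Finset V => IsEdge m α β))
    (fun h => Relation.TransGen.single h) hwf

end MorseWF

section MorsePhi

set_option linter.unusedSectionVars false

variable {V : Type*} [Fintype V] [DecidableEq V] {K : Set (Finset V)}
  {m : PartialMatching V} {φ : Finset V → Ch V}

lemma zmod2_add_eq_zero : ∀ {a b : ZMod 2}, a + b = 0 → a = b := by decide

lemma phi_add_single (hMK : m.M ⊆ K) (hac : m.Acyclic) (hφ : IsClosure K m φ) :
    ∀ α, α ∈ K → φ α + Finsupp.single α (1 : ZMod 2) ∈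
      Finsupp.supported (ZMod 2) (ZMod 2) (MupCard m α.card) := by
  classical
  intro α₀
  refine (edge_wf_swap hac).induction (C := fun α => α ∈ K →
    φ α + Finsupp.single α (1 : ZMod 2) ∈
      Finsupp.supported (ZMod 2) (ZMod 2) (MupCard m α.card)) α₀ ?_
  intro α IH hα
  have heq : φ α + Finsupp.single α (1 : ZMod 2)
      = ∑ β : Finset V, if IsEdge m α β then φ β else 0 := by
    rw [hφ α hα, add_comm, ← add_assoc, ch_add_self, zero_add]
  rw [heq]
  apply Submodule.sum_mem
  intro β _
  by_cases hβ : IsEdge m α β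
  · rw [if_pos hβ]
    have hcard : β.card = α.card := edge_card hβ
    have hmem : β ∈ MupCard m α.card := ⟨⟨hβ.2.1, hβ.2.2.1⟩, hcard⟩
    have h1 := IH β hβ (hMK hβ.2.1)
    rw [hcard] at h1
    have h2 : Finsupp.single β (1 : ZMod 2) ∈
        Finsupp.supported (ZMod 2) (ZMod 2) (MupCard m α.card) :=
      Finsupp.single_mem_supported _ 1 hmem
    have heq2 : φ β = (φ β + Finsupp.single β 1) + Finsupp.single β 1 := by
      rw [add_assoc, ch_add_self, add_zero]
    rw [heq2]
    exact Submodule.add_mem _ h1 h2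
  · rw [if_neg hβ]
    exact Submodule.zero_mem _

lemma phi_supported (hMK : m.M ⊆ K) (hac : m.Acyclic) (hφ : IsClosure K m φ) :
    ∀ α, α ∈ K → φ α ∈
      Finsupp.supported (ZMod 2) (ZMod 2) {σ | σ ∈ K ∧ σ.card = α.card} := by
  intro α hα
  have h1 := phi_add_single hMK hac hφ α hα
  have heq : φ α = (φ α + Finsupp.single α 1) + Finsupp.single α 1 := by
    rw [add_assoc, ch_add_self, add_zero]
  rw [heq]
  apply Submodule.add_mem
  · refine Finsupp.supported_mono ?_ h1
    rintro σ ⟨⟨hM, hup⟩, hc⟩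
    exact ⟨hMK hM, hc⟩
  · exact Finsupp.single_mem_supported _ 1 ⟨hα, rfl⟩

lemma phi_apply_ne (hMK : m.M ⊆ K) (hac : m.Acyclic) (hφ : IsClosure K m φ)
    {α γ : Finset V} (hα : α ∈ K) (hγ : γ ∉ MupCard m α.card) (hne : γ ≠ α) :
    φ α γ = 0 := by
  have h1 := phi_add_single hMK hac hφ α hα
  rw [Finsupp.mem_supported'] at h1
  have h2 := h1 γ hγ
  rw [Finsupp.add_apply, Finsupp.single_apply, if_neg (fun h => hne h.symm), add_zero] at h2
  exact h2

lemma phi_apply_critical (hMK : m.M ⊆ K) (hac : m.Acyclic) (hφ : IsClosure K m φ)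
    {α γ : Finset V} (hα : α ∈ K) (hγM : γ ∉ m.M) :
    φ α γ = if α = γ then 1 else 0 := by
  by_cases h : α = γ
  · subst h
    rw [if_pos rfl]
    have h1 := phi_add_single hMK hac hφ α hα
    rw [Finsupp.mem_supported'] at h1
    have h2 := h1 α (fun hc => hγM hc.1.1)
    rw [Finsupp.add_apply, Finsupp.single_eq_same] at h2
    exact zmod2_add_eq_zero h2
  · rw [if_neg h]
    exact phi_apply_ne hMK hac hφ hα (fun hc => hγM hc.1.1) (fun he => h he.symm)

lemma phi_bdry_apply (hK : IsComplex K) (hMK : m.M ⊆ K) (hac : m.Acyclic)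
    (hφ : IsClosure K m φ) :
    ∀ α, α ∈ K → ∀ τ, τ ∈ m.M → Covers (m.μ τ) τ →
      bdry V (φ α) τ = if m.μ τ = α then 1 else 0 := by
  classical
  intro α₀
  refine (edge_wf_swap hac).induction (C := fun α => α ∈ K → ∀ τ, τ ∈ m.M →
    Covers (m.μ τ) τ → bdry V (φ α) τ = if m.μ τ = α then 1 else 0) α₀ ?_
  intro α IH hα τ hτM hτd
  rw [hφ α hα, map_add, map_sum, Finsupp.add_apply, Finsupp.finset_sum_apply,
    bdry_single_apply]
  have hterm : ∀ β : Finset V, β ∈ Finset.univ →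
      (bdry V (if IsEdge m α β then φ β else 0)) τ
        = if β = m.μ τ then (if IsEdge m α β then (1 : ZMod 2) else 0) else 0 := by
    intro β _
    by_cases hβ : IsEdge m α β
    · rw [if_pos hβ]
      have hIH := IH β hβ (hMK hβ.2.1) τ hτM hτd
      rw [hIH]
      by_cases hbe : β = m.μ τ
      · rw [if_pos hbe.symm, if_pos hbe, if_pos hβ]
      · rw [if_neg (fun h => hbe h.symm), if_neg hbe]
    · rw [if_neg hβ, map_zero, Finsupp.zero_apply]
      by_cases hbe : β = m.μ τ
      · rw [if_pos hbe, if_neg hβ]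
      · rw [if_neg hbe]
  rw [Finset.sum_congr rfl hterm,
    Finset.sum_eq_single_of_mem (m.μ τ) (Finset.mem_univ _) (fun b _ hb => if_neg hb),
    if_pos rfl]
  have hμμ : m.μ (m.μ τ) = τ := m.invol τ hτM
  have hμM : m.μ τ ∈ m.M := m.mem_M τ hτM
  have hτcard : 1 ≤ τ.card := Finset.card_pos.2 (hK τ (hMK hτM)).1
  by_cases hcase : m.μ τ = α
  · rw [if_pos hcase]
    have hcov : Covers α τ := hcase ▸ hτd
    have hcard : 2 ≤ α.card := by
      obtain ⟨-, hc⟩ := hcov; omega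
    rw [if_pos ⟨hcov, hcard⟩, if_neg (fun he => he.1 hcase)]
    decide
  · rw [if_neg hcase]
    by_cases hcov : Covers α τ
    · have hcard : 2 ≤ α.card := by
        obtain ⟨-, hc⟩ := hcov; omega
      have hE : IsEdge m α (m.μ τ) :=
        ⟨hcase, hμM, by rw [hμμ]; exact hτd, by rw [hμμ]; exact hcov⟩
      rw [if_pos ⟨hcov, hcard⟩, if_pos hE]
      decide
    · rw [if_neg (fun hcon => hcov hcon.1), if_neg (fun he => hcov (hμμ ▸ he.2.2.2))]
      decide

end MorsePhi

section MorseDecomp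

set_option linter.unusedSectionVars false

variable {V : Type*} [Fintype V] [DecidableEq V] {K : Set (Finset V)}
  {m : PartialMatching V} {φ : Finset V → Ch V}

lemma zmod2_self : ∀ a : ZMod 2, a + a = 0 := by decide

lemma covers_erase {σ τ : Finset V} (h : Covers σ τ) : ∃ v ∈ σ, σ.erase v = τ := by
  obtain ⟨hsub, hcard⟩ := h
  have hne : (σ \ τ).Nonempty := by
    rw [← Finset.card_pos, Finset.card_sdiff_of_subset hsub]; omega
  obtain ⟨v, hv⟩ := hne
  have hone : (σ \ τ).card = 1 := by rw [Finset.card_sdiff_of_subset hsub]; omega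
  obtain ⟨w, hw⟩ := Finset.card_eq_one.1 hone
  have hvw : v = w := by rwa [hw, Finset.mem_singleton] at hv
  subst hvw
  rw [Finset.mem_sdiff] at hv
  refine ⟨v, hv.1, ?_⟩
  rw [Finset.erase_eq, ← hw, Finset.sdiff_sdiff_self_left]
  exact Finset.inter_eq_right.2 hsub

lemma supportedMup_le_matchW (k : ℕ) :
    Finsupp.supported (ZMod 2) (ZMod 2) (MupCard m k) ≤ matchW m k := by
  rw [Finsupp.supported_eq_span_single]
  refine Submodule.span_le.2 ?_
  rintro f ⟨σ, hσ, rfl⟩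
  exact Submodule.subset_span (Or.inl ⟨σ, hσ, rfl⟩)

lemma critW_le_supported (hMK : m.M ⊆ K) (hac : m.Acyclic) (hφ : IsClosure K m φ)
    (k : ℕ) :
    critWOn K m φ k ≤ Finsupp.supported (ZMod 2) (ZMod 2)
      ({σ | σ ∈ K ∧ σ.card = k ∧ σ ∉ m.M} ∪ MupCard m k) := by
  refine Submodule.span_le.2 ?_
  rintro f ⟨γ, hγ, hc, hm, rfl⟩
  have h1 := phi_add_single hMK hac hφ γ hγ
  rw [hc] at h1
  have heq : φ γ = (φ γ + Finsupp.single γ 1) + Finsupp.single γ 1 := by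
    rw [add_assoc, ch_add_self, add_zero]
  rw [SetLike.mem_coe, heq]
  apply Submodule.add_mem
  · exact Finsupp.supported_mono Set.subset_union_right h1
  · exact Finsupp.single_mem_supported _ 1 (Or.inl ⟨hγ, hc, hm⟩)

lemma supported_le_chainCard (k : ℕ) :
    Finsupp.supported (ZMod 2) (ZMod 2) {σ | σ ∈ K ∧ σ.card = k} ≤ chainCard K k := by
  rw [Finsupp.supported_eq_span_single]
  refine Submodule.span_le.2 ?_
  rintro f ⟨σ, ⟨h1, h2⟩, rfl⟩
  exact Submodule.subset_span ⟨σ, h1, h2, rfl⟩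

lemma bdry_supported_le (hK : IsComplex K) (j : ℕ) :
    Submodule.map (bdry V)
        (Finsupp.supported (ZMod 2) (ZMod 2) {σ | σ ∈ K ∧ σ.card = j + 1})
      ≤ Finsupp.supported (ZMod 2) (ZMod 2) {σ | σ ∈ K ∧ σ.card = j} := by
  rw [Finsupp.supported_eq_span_single, Submodule.map_span]
  refine Submodule.span_le.2 ?_
  rintro g ⟨f, ⟨σ, ⟨hσK, hσc⟩, rfl⟩, rfl⟩
  rw [SetLike.mem_coe, bdry_single]
  by_cases h : σ.card ≤ 1
  · rw [if_pos h]; exact Submodule.zero_mem _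
  · rw [if_neg h]
    apply Submodule.sum_mem
    intro v hv
    have hc : (σ.erase v).card = j := by rw [Finset.card_erase_of_mem hv]; omega
    have hne : (σ.erase v).Nonempty := by rw [← Finset.card_pos, hc]; omega
    exact Finsupp.single_mem_supported _ 1
      ⟨(hK σ hσK).2 _ (Finset.erase_subset v σ) hne, hc⟩

lemma matchW_eq (m : PartialMatching V) (k : ℕ) : matchW m k
    = Finsupp.supported (ZMod 2) (ZMod 2) (MupCard m k)
      ⊔ Submodule.map (bdry V)
          (Finsupp.supported (ZMod 2) (ZMod 2) (MupCard m (k + 1))) := by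
  rw [matchW, Submodule.span_union, Finsupp.supported_eq_span_single,
    Finsupp.supported_eq_span_single, Submodule.map_span]
  congr 1
  · congr 1
    ext f
    constructor
    · rintro ⟨σ, hσ, rfl⟩; exact ⟨σ, hσ, rfl⟩
    · rintro ⟨σ, hσ, rfl⟩; exact ⟨σ, hσ, rfl⟩
  · congr 1
    ext f
    constructor
    · rintro ⟨β, hβ, rfl⟩; exact ⟨Finsupp.single β 1, ⟨β, hβ, rfl⟩, rfl⟩
    · rintro ⟨g, ⟨β, hβ, rfl⟩, rfl⟩; exact ⟨β, hβ, rfl⟩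

lemma eq_zero_of_mup_supported (hK : IsComplex K) (hMK : m.M ⊆ K) (hac : m.Acyclic)
    {y : Ch V} (hy : y ∈ Finsupp.supported (ZMod 2) (ZMod 2) (Mup m))
    (h0 : ∀ τ, τ ∈ m.M → Covers (m.μ τ) τ → bdry V y τ = 0) : y = 0 := by
  classical
  by_contra hne
  have hsupp : (↑y.support : Set (Finset V)).Nonempty := by
    rw [Finset.coe_nonempty, Finsupp.support_nonempty_iff]; exact hne
  obtain ⟨β₀, hβ₀s, hβ₀min⟩ := (edge_wf hac).has_min _ hsupp
  rw [Finsupp.mem_supported] at hy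
  have hβ₀up : β₀ ∈ Mup m := hy hβ₀s
  have hτ₀M : m.μ β₀ ∈ m.M := m.mem_M β₀ hβ₀up.1
  have hμτ₀ : m.μ (m.μ β₀) = β₀ := m.invol β₀ hβ₀up.1
  have hτ₀d : Covers (m.μ (m.μ β₀)) (m.μ β₀) := by rw [hμτ₀]; exact hβ₀up.2
  have hzero := h0 (m.μ β₀) hτ₀M hτ₀d
  have hcard : 2 ≤ β₀.card := by
    have h1 : (m.μ β₀).Nonempty := (hK _ (hMK hτ₀M)).1
    have h2 : 1 ≤ (m.μ β₀).card := Finset.card_pos.2 h1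
    have h3 := hβ₀up.2.2
    omega
  have heval : bdry V y (m.μ β₀) = y β₀ := by
    conv_lhs => rw [← Finsupp.sum_single y]
    rw [map_finsuppSum, Finsupp.sum, Finsupp.finset_sum_apply]
    have hterm : ∀ σ ∈ y.support,
        (bdry V (Finsupp.single σ (y σ))) (m.μ β₀)
          = if σ = β₀ then y σ else 0 := by
      intro σ hσ
      have hsm : Finsupp.single σ (y σ) = (y σ) • Finsupp.single σ (1 : ZMod 2) := by
        rw [Finsupp.smul_single, smul_eq_mul, mul_one]
      rw [hsm, map_smul, Finsupp.smul_apply, bdry_single_apply, smul_eq_mul]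
      by_cases hσβ : σ = β₀
      · subst hσβ
        rw [if_pos ⟨hβ₀up.2, hcard⟩, if_pos rfl, mul_one]
      · rw [if_neg hσβ, mul_ite, mul_one, mul_zero]
        rw [if_neg]
        intro hcon
        exact hβ₀min σ (Finset.mem_coe.2 hσ)
          ⟨fun h => hσβ h.symm, hβ₀up.1, hβ₀up.2, hcon.1⟩
    rw [Finset.sum_congr rfl hterm,
      Finset.sum_eq_single_of_mem β₀ hβ₀s (fun b _ hb => if_neg hb), if_pos rfl]
  rw [heval] at hzero
  exact (Finsupp.mem_support_iff.1 hβ₀s) hzero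

end MorseDecomp

section MorseSpan

set_option linter.unusedSectionVars false

variable {V : Type*} [Fintype V] [DecidableEq V] {K : Set (Finset V)}
  {m : PartialMatching V} {φ : Finset V → Ch V}

lemma critical_mem (hMK : m.M ⊆ K) (hac : m.Acyclic) (hφ : IsClosure K m φ)
    {α : Finset V} (hα : α ∈ K) (hm : α ∉ m.M) :
    Finsupp.single α (1 : ZMod 2) ∈ critWOn K m φ α.card ⊔ matchW m α.card := by
  have heq : Finsupp.single α (1 : ZMod 2) = φ α + (φ α + Finsupp.single α 1) := by
    rw [← add_assoc, ch_add_self, zero_add]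
  rw [heq]
  apply Submodule.add_mem
  · exact Submodule.mem_sup_left (Submodule.subset_span ⟨α, hα, rfl, hm, rfl⟩)
  · exact Submodule.mem_sup_right
      (supportedMup_le_matchW _ (phi_add_single hMK hac hφ α hα))

lemma mdown_single_mem (hK : IsComplex K) (hMK : m.M ⊆ K) (hac : m.Acyclic)
    (hφ : IsClosure K m φ) :
    ∀ β, β ∈ m.M → Covers β (m.μ β) →
      Finsupp.single (m.μ β) (1 : ZMod 2)
        ∈ critWOn K m φ (m.μ β).card ⊔ matchW m (m.μ β).card := by
  intro β₀
  refine (edge_wf_swap hac).induction (C := fun β => β ∈ m.M → Covers β (m.μ β) →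
    Finsupp.single (m.μ β) (1 : ZMod 2)
      ∈ critWOn K m φ (m.μ β).card ⊔ matchW m (m.μ β).card) β₀ ?_
  intro β IH hβM hβup
  have hβK : β ∈ K := hMK hβM
  have hτK : m.μ β ∈ K := hMK (m.mem_M β hβM)
  have hτc1 : 1 ≤ (m.μ β).card := Finset.card_pos.2 (hK _ hτK).1
  have hcards : β.card = (m.μ β).card + 1 := hβup.2
  obtain ⟨v₀, hv₀β, hv₀e⟩ := covers_erase hβup
  have hbd : bdry V (Finsupp.single β (1 : ZMod 2))
      = ∑ v ∈ β, Finsupp.single (β.erase v) 1 := by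
    rw [bdry_single, if_neg (by omega)]
  have hsplit : ∑ v ∈ β, Finsupp.single (β.erase v) (1 : ZMod 2)
      = Finsupp.single (m.μ β) 1 + ∑ v ∈ β.erase v₀, Finsupp.single (β.erase v) 1 := by
    rw [← Finset.add_sum_erase β _ hv₀β, hv₀e]
  have hkey : Finsupp.single (m.μ β) (1 : ZMod 2)
      = bdry V (Finsupp.single β 1)
        + ∑ v ∈ β.erase v₀, Finsupp.single (β.erase v) 1 := by
    rw [hbd, hsplit, add_assoc, ch_add_self, add_zero]
  rw [hkey]
  apply Submodule.add_mem
  · apply Submodule.mem_sup_right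
    apply Submodule.subset_span
    right
    exact ⟨β, ⟨⟨hβM, hβup⟩, by omega⟩, rfl⟩
  · apply Submodule.sum_mem
    intro v hv
    have hvβ : v ∈ β := Finset.mem_of_mem_erase hv
    have hvne : v ≠ v₀ := Finset.ne_of_mem_erase hv
    have hτ'c : (β.erase v).card = (m.μ β).card := by
      rw [Finset.card_erase_of_mem hvβ]; omega
    have hτ'K : β.erase v ∈ K :=
      (hK β hβK).2 _ (Finset.erase_subset _ _)
        (by rw [← Finset.card_pos, hτ'c]; omega)
    have hτ'ne : β.erase v ≠ m.μ β := by
      intro he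
      have h1 : v ∈ β.erase v₀ := Finset.mem_erase.2 ⟨hvne, hvβ⟩
      rw [hv₀e, ← he] at h1
      exact Finset.notMem_erase v β h1
    by_cases hM' : β.erase v ∈ m.M
    · rcases m.matched _ hM' with hdn' | hup'
      · -- β.erase v is in M^↓; recurse on its partner
        have hμ'M : m.μ (β.erase v) ∈ m.M := m.mem_M _ hM'
        have hinv : m.μ (m.μ (β.erase v)) = β.erase v := m.invol _ hM'
        have hup'' : Covers (m.μ (β.erase v)) (m.μ (m.μ (β.erase v))) := by
          rw [hinv]; exact hdn'
        have hcovβ : Covers β (β.erase v) :=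
          ⟨Finset.erase_subset _ _, by omega⟩
        have hedge : IsEdge m β (m.μ (β.erase v)) := by
          refine ⟨?_, hμ'M, hup'', by rw [hinv]; exact hcovβ⟩
          intro he
          apply hτ'ne
          calc β.erase v = m.μ (m.μ (β.erase v)) := hinv.symm
            _ = m.μ β := by rw [he]
        have hres := IH _ hedge hμ'M hup''
        rw [hinv, hτ'c] at hres
        exact hres
      · -- β.erase v is in M^↑
        apply Submodule.mem_sup_right
        apply Submodule.subset_span
        left
        exact ⟨β.erase v, ⟨⟨hM', hup'⟩, hτ'c⟩, rfl⟩
    · -- β.erase v is critical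
      have hres := critical_mem hMK hac hφ hτ'K hM'
      rw [hτ'c] at hres
      exact hres

lemma single_mem_sup (hK : IsComplex K) (hMK : m.M ⊆ K) (hac : m.Acyclic)
    (hφ : IsClosure K m φ) {α : Finset V} (hα : α ∈ K) :
    Finsupp.single α (1 : ZMod 2) ∈ critWOn K m φ α.card ⊔ matchW m α.card := by
  by_cases hM : α ∈ m.M
  · rcases m.matched α hM with hdn | hup
    · have hμM := m.mem_M α hM
      have hinv := m.invol α hM
      have hup' : Covers (m.μ α) (m.μ (m.μ α)) := by rw [hinv]; exact hdn
      have hres := mdown_single_mem hK hMK hac hφ (m.μ α) hμM hup'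
      rw [hinv] at hres
      exact hres
    · exact Submodule.mem_sup_right
        (Submodule.subset_span (Or.inl ⟨α, ⟨⟨hM, hup⟩, rfl⟩, rfl⟩))
  · exact critical_mem hMK hac hφ hα hM

lemma sup_eq_chainCard (hK : IsComplex K) (hMK : m.M ⊆ K) (hac : m.Acyclic)
    (hφ : IsClosure K m φ) (k : ℕ) :
    critWOn K m φ (k + 1) ⊔ matchW m (k + 1) = chainCard K (k + 1) := by
  apply le_antisymm
  · apply sup_le
    · refine Submodule.span_le.2 ?_
      rintro f ⟨γ, hγ, hc, hm, rfl⟩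
      have h1 := phi_supported hMK hac hφ γ hγ
      rw [hc] at h1
      exact supported_le_chainCard _ h1
    · rw [matchW_eq]
      apply sup_le
      · refine le_trans (Finsupp.supported_mono ?_) (supported_le_chainCard (k + 1))
        rintro σ ⟨⟨h1, h2⟩, h3⟩; exact ⟨hMK h1, h3⟩
      · refine le_trans (Submodule.map_mono (Finsupp.supported_mono ?_))
          (le_trans (bdry_supported_le hK (k + 1)) (supported_le_chainCard _))
        rintro σ ⟨⟨h1, h2⟩, h3⟩; exact ⟨hMK h1, h3⟩
  · refine Submodule.span_le.2 ?_
    rintro f ⟨σ, hσ, hc, rfl⟩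
    have hres := single_mem_sup hK hMK hac hφ hσ
    rw [hc] at hres
    exact hres

lemma critW_apply_mdown (hMK : m.M ⊆ K) (hac : m.Acyclic) (hφ : IsClosure K m φ)
    {k : ℕ} {x : Ch V} (hx : x ∈ critWOn K m φ k) {τ : Finset V}
    (hτ : τ ∈ m.M) (hτd : Covers (m.μ τ) τ) : x τ = 0 := by
  have h := critW_le_supported hMK hac hφ k hx
  rw [Finsupp.mem_supported'] at h
  apply h
  rintro (⟨-, -, hm⟩ | ⟨⟨hm, hup⟩, -⟩)
  · exact hm hτ
  · obtain ⟨-, h1⟩ := hup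
    obtain ⟨-, h2⟩ := hτd
    omega

end MorseSpan

section MorseFinal

set_option linter.unusedSectionVars false

variable {V : Type*} [Fintype V] [DecidableEq V] {K : Set (Finset V)}
  {m : PartialMatching V} {φ : Finset V → Ch V}

lemma inf_bot (hK : IsComplex K) (hMK : m.M ⊆ K) (hac : m.Acyclic)
    (hφ : IsClosure K m φ) (k : ℕ) :
    critWOn K m φ (k + 1) ⊓ matchW m (k + 1) = ⊥ := by
  classical
  rw [eq_bot_iff]
  rintro x ⟨hxC, hxM⟩
  rw [matchW_eq] at hxM
  obtain ⟨u, hu, d, hd, hx⟩ := Submodule.mem_sup.1 hxM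
  obtain ⟨y, hy, rfl⟩ := hd
  have hu' := (Finsupp.mem_supported' _ _).1 hu
  have hd0 : ∀ τ, τ ∈ m.M → Covers (m.μ τ) τ → bdry V y τ = 0 := by
    intro τ hτ hτd
    have h1 : x τ = 0 := critW_apply_mdown hMK hac hφ hxC hτ hτd
    have h2 : u τ = 0 := by
      apply hu'
      rintro ⟨⟨-, hup⟩, -⟩
      obtain ⟨-, ha⟩ := hup
      obtain ⟨-, hb⟩ := hτd
      omega
    have h3 := congrArg (fun z : Ch V => z τ) hx
    simp only [Finsupp.add_apply] at h3
    rw [h1, h2, zero_add] at h3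
    exact h3
  have hy0 : y = 0 :=
    eq_zero_of_mup_supported hK hMK hac
      (Finsupp.supported_mono (fun σ hσ => hσ.1) hy) hd0
  have hxu : x = u := by
    rw [← hx, hy0, map_zero, add_zero]
  obtain ⟨c, hcsupp, hcsum⟩ := Submodule.mem_span_set.1 hxC
  have hc0 : c = 0 := by
    by_contra hcne
    obtain ⟨f₀, hf₀⟩ := Finsupp.support_nonempty_iff.2 hcne
    obtain ⟨γ₀, hγ₀K, hγ₀c, hγ₀m, hf₀eq⟩ := hcsupp hf₀
    have hxγ : x γ₀ = c f₀ := by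
      rw [← hcsum, Finsupp.sum_apply, Finsupp.sum]
      have hterm : ∀ f ∈ c.support, (c f • f) γ₀ = if f = f₀ then c f else 0 := by
        intro f hf
        obtain ⟨γ, hγK, hγc, hγm, hfeq⟩ := hcsupp hf
        subst hfeq
        rw [Finsupp.smul_apply, phi_apply_critical hMK hac hφ hγK hγ₀m]
        by_cases he : γ = γ₀
        · subst he
          rw [if_pos rfl, smul_eq_mul, mul_one, if_pos hf₀eq.symm]
        · rw [if_neg he, smul_zero, if_neg]
          intro hff
          apply he
          rw [hf₀eq] at hff
          have h1 : φ γ γ = 1 := by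
            rw [phi_apply_critical hMK hac hφ hγK hγm, if_pos rfl]
          rw [hff] at h1
          rw [phi_apply_critical hMK hac hφ hγ₀K hγm] at h1
          by_contra hne2
          rw [if_neg (fun hgg => hne2 hgg.symm)] at h1
          exact one_ne_zero h1.symm
      rw [Finset.sum_congr rfl hterm,
        Finset.sum_eq_single_of_mem f₀ hf₀ (fun b _ hb => if_neg hb), if_pos rfl]
    have hu0 : x γ₀ = 0 := by
      rw [hxu]
      apply hu'
      rintro ⟨⟨hm, -⟩, -⟩
      exact hγ₀m hm
    rw [hxγ] at hu0
    exact (Finsupp.mem_support_iff.1 hf₀) hu0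
  rw [Submodule.mem_bot, ← hcsum, hc0]
  exact Finsupp.sum_zero_index

lemma bdry_matchW_le (k : ℕ) :
    Submodule.map (bdry V) (matchW m (k + 1)) ≤ matchW m k := by
  rw [matchW, Submodule.map_span]
  refine Submodule.span_le.2 ?_
  rintro f ⟨g, hg, rfl⟩
  rcases hg with ⟨σ, hσ, rfl⟩ | ⟨β, hβ, rfl⟩
  · exact Submodule.subset_span (Or.inr ⟨σ, hσ, rfl⟩)
  · rw [SetLike.mem_coe, bdry_bdry]
    exact Submodule.zero_mem _

lemma bdry_critW_le (hK : IsComplex K) (hMK : m.M ⊆ K) (hac : m.Acyclic)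
    (hφ : IsClosure K m φ) :
    ∀ k, Submodule.map (bdry V) (critWOn K m φ (k + 1)) ≤ critWOn K m φ k := by
  intro k₀
  induction k₀ using Nat.strong_induction_on with
  | _ k IH =>
  rw [critWOn, Submodule.map_span]
  refine Submodule.span_le.2 ?_
  rintro x ⟨g, ⟨γ, hγK, hγc, hγm, rfl⟩, rfl⟩
  classical
  rw [SetLike.mem_coe]
  set x := bdry V (φ γ) with hxdef
  have hxsup : x ∈ Finsupp.supported (ZMod 2) (ZMod 2) {σ | σ ∈ K ∧ σ.card = k} := by
    apply bdry_supported_le hK k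
    refine ⟨φ γ, ?_, rfl⟩
    have h1 := phi_supported hMK hac hφ γ hγK
    rwa [hγc] at h1
  have hxsup' := (Finsupp.mem_supported' _ _).1 hxsup
  set T : Finset (Finset V) := x.support.filter (fun δ => δ ∉ m.M) with hTdef
  have hTel : ∀ δ ∈ T, δ ∈ K ∧ δ.card = k ∧ δ ∉ m.M := by
    intro δ hδ
    rw [hTdef, Finset.mem_filter] at hδ
    have h1 := (Finsupp.mem_supported _ x).1 hxsup hδ.1
    exact ⟨h1.1, h1.2, hδ.2⟩
  set w : Ch V := ∑ δ ∈ T, x δ • φ δ with hwdef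
  have hwmem : w ∈ critWOn K m φ k := by
    apply Submodule.sum_mem
    intro δ hδ
    obtain ⟨h1, h2, h3⟩ := hTel δ hδ
    exact Submodule.smul_mem _ _ (Submodule.subset_span ⟨δ, h1, h2, h3, rfl⟩)
  have hwapply : ∀ δ, w δ = ∑ δ' ∈ T, x δ' * (φ δ') δ := by
    intro δ
    rw [hwdef, Finsupp.finset_sum_apply]
    apply Finset.sum_congr rfl
    intro δ' _
    rw [Finsupp.smul_apply, smul_eq_mul]
  set y : Ch V := x + w with hydef
  have hy : y ∈ Finsupp.supported (ZMod 2) (ZMod 2) (MupCard m k) := by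
    rw [Finsupp.mem_supported']
    intro δ hδ
    rw [hydef, Finsupp.add_apply]
    by_cases hδKc : δ ∈ {σ | σ ∈ K ∧ σ.card = k}
    · by_cases hδM : δ ∈ m.M
      · have hδdn : Covers (m.μ δ) δ := by
          rcases m.matched δ hδM with h | h
          · exact h
          · exact absurd ⟨⟨hδM, h⟩, hδKc.2⟩ hδ
        have hx0 : x δ = 0 := by
          rw [hxdef, phi_bdry_apply hK hMK hac hφ γ hγK δ hδM hδdn, if_neg]
          intro he
          exact hγm (he ▸ m.mem_M δ hδM)
        have hw0 : w δ = 0 := by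
          rw [hwapply]
          apply Finset.sum_eq_zero
          intro δ' hδ'
          obtain ⟨h1, h2, h3⟩ := hTel δ' hδ'
          rw [phi_apply_ne hMK hac hφ h1 (by rw [h2]; exact hδ)
            (fun he => h3 (he ▸ hδM)), mul_zero]
        rw [hx0, hw0, add_zero]
      · have hwδ : w δ = x δ := by
          rw [hwapply]
          have hterm : ∀ δ' ∈ T, x δ' * (φ δ') δ = if δ' = δ then x δ' else 0 := by
            intro δ' hδ'
            obtain ⟨h1, h2, h3⟩ := hTel δ' hδ'
            rw [phi_apply_critical hMK hac hφ h1 hδM]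
            by_cases he : δ' = δ
            · rw [if_pos he, if_pos he, mul_one]
            · rw [if_neg he, if_neg he, mul_zero]
          rw [Finset.sum_congr rfl hterm]
          by_cases hδT : δ ∈ T
          · rw [Finset.sum_eq_single_of_mem δ hδT (fun b _ hb => if_neg hb), if_pos rfl]
          · have hall : ∀ b ∈ T, (if b = δ then x b else 0) = 0 := by
              intro b hb
              rw [if_neg]
              intro he
              subst he
              exact hδT hb
            rw [Finset.sum_eq_zero hall]
            have : δ ∉ x.support := by
              intro hc
              exact hδT (by rw [hTdef, Finset.mem_filter]; exact ⟨hc, hδM⟩)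
            rw [Finsupp.notMem_support_iff.1 this]
        rw [hwδ, zmod2_self]
    · have hx0 : x δ = 0 := hxsup' δ hδKc
      have hw0 : w δ = 0 := by
        rw [hwapply]
        apply Finset.sum_eq_zero
        intro δ' hδ'
        obtain ⟨h1, h2, h3⟩ := hTel δ' hδ'
        have hsup := phi_supported hMK hac hφ δ' h1
        rw [h2] at hsup
        rw [(Finsupp.mem_supported' _ _).1 hsup δ hδKc, mul_zero]
      rw [hx0, hw0, add_zero]
  have hxw : w + y = x := by
    rw [hydef, add_comm x w, ← add_assoc, ch_add_self, zero_add]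
  have hy0 : y = 0 := by
    rcases Nat.eq_zero_or_pos k with hk0 | hkpos
    · subst hk0
      ext δ
      rw [Finsupp.zero_apply]
      by_cases hδ : δ ∈ MupCard m 0
      · exfalso
        obtain ⟨⟨h1, -⟩, h3⟩ := hδ
        have h4 : 1 ≤ δ.card := Finset.card_pos.2 (hK δ (hMK h1)).1
        omega
      · exact (Finsupp.mem_supported' _ _).1 hy δ hδ
    · have hbw : bdry V w ∈ critWOn K m φ (k - 1) := by
        apply IH (k - 1) (by omega)
        have hke : k - 1 + 1 = k := by omega
        rw [hke]
        exact ⟨w, hwmem, rfl⟩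
      have hby : bdry V y = bdry V w := by
        have hbx : bdry V x = 0 := by rw [hxdef, bdry_bdry]
        rw [hydef, map_add, hbx, zero_add]
      apply eq_zero_of_mup_supported hK hMK hac
        (Finsupp.supported_mono (fun σ hσ => hσ.1) hy)
      intro τ hτ hτd
      rw [hby]
      exact critW_apply_mdown hMK hac hφ hbw hτ hτd
  rw [← hxw, hy0, add_zero]
  exact hwmem

end MorseFinal

/-- For a finite simplicial complex `K` with an acyclic partial matching
`μ`, the graded subspaces `Crit_*(K, μ)` and `Match_*(K, μ)` are both closed under the
boundary operator, and `C_q(K) = Crit_q(K, μ) ⊕ Match_q(K, μ)` for every `q ≥ 0`. -/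
theorem crit_match_decomposition {V : Type*} [Fintype V] [DecidableEq V]
    (K : Set (Finset V)) (hK : IsComplex K)
    (m : PartialMatching V) (hMK : m.M ⊆ K) (hac : m.Acyclic)
    (φ : Finset V → Ch V) (hφ : IsClosure K m φ) :
    (∀ k : ℕ, Submodule.map (bdry V) (critWOn K m φ (k + 1)) ≤ critWOn K m φ k) ∧
    (∀ k : ℕ, Submodule.map (bdry V) (matchW m (k + 1)) ≤ matchW m k) ∧
    (∀ q : ℕ, critWOn K m φ (q + 1) ⊓ matchW m (q + 1) = ⊥ ∧
      critWOn K m φ (q + 1) ⊔ matchW m (q + 1) = chainCard K (q + 1)) := by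
  exact ⟨bdry_critW_le hK hMK hac hφ, fun k => bdry_matchW_le k,
    fun q => ⟨inf_bot hK hMK hac hφ q, sup_eq_chainCard hK hMK hac hφ q⟩⟩
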